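/- arXiv:2007.02030 — 5 statements merged into one kernel-verified Lean document; each statement's English description precedes it below -/
import Mathlib

section
/- Let a ∈ F^× and let F(z) ∈ F[[z,z^{-1}]] be a formal distribution, A(v) ∈ F[[v]] a nonzero formal power series, n ∈ ℕ, and B₀(v),…,B_n(v) ∈ F[[v]], such that (z - a)·A(v)·F(z) + ∑_{p=0}^n B_p(v) δ^{(p)}(z/a) = 0. Then F(z) = ∑_{p=0}^{n+1} f_p δ^{(p)}(z/a) for some scalars f₀,…,f_{n+1} ∈ F. -/
/-- coefficient of `z^k` in `δ^{(p)}(z/a) = ∑_{m∈ℤ} (∏_{i<p}(m-i)) (z/a)^{m-p}`. -/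
noncomputable def deltaD {F : Type*} [Field F] (p : ℕ) (a : F) (k : ℤ) : F :=
  ((∏ i ∈ Finset.range p, (k + (p : ℤ) - (i : ℤ)) : ℤ) : F) * a ^ (-k)

lemma deltaD_zero_rec {F : Type*} [Field F] (a : F) (ha : a ≠ 0) (k : ℤ) :
    deltaD 0 a (k - 1) = a * deltaD 0 a k := by
  simp only [deltaD, Finset.range_zero, Finset.prod_empty, Int.cast_one, one_mul]
  rw [neg_sub, sub_eq_add_neg, zpow_add₀ ha, zpow_one]

lemma deltaD_succ_rec {F : Type*} [Field F] (a : F) (ha : a ≠ 0) (p : ℕ) (k : ℤ) :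
    deltaD (p+1) a (k - 1) = a * deltaD (p+1) a k - ((p:F)+1) * a * deltaD p a k := by
  have hprod : (∏ i ∈ Finset.range (p+1), ((k-1) + ((p:ℤ)+1) - (i:ℤ)))
      = (∏ i ∈ Finset.range (p+1), (k + ((p:ℤ)+1) - (i:ℤ)))
        - ((p:ℤ)+1) * ∏ i ∈ Finset.range p, (k + (p:ℤ) - (i:ℤ)) := by
    rw [Finset.prod_range_succ, Finset.prod_range_succ']
    have h1 : ∀ i ∈ Finset.range p, (k - 1 + ((p:ℤ)+1) - (i:ℤ)) = k + (p:ℤ) - i := by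
      intro i _; ring
    have h2 : ∀ i ∈ Finset.range p, (k + ((p:ℤ)+1) - (((i:ℕ)+1 : ℕ):ℤ)) = k + (p:ℤ) - i := by
      intro i _; push_cast; ring
    rw [Finset.prod_congr rfl h1, Finset.prod_congr rfl h2]
    ring
  have hzpow : a ^ (-(k-1)) = a * a ^ (-k) := by
    rw [neg_sub, sub_eq_add_neg, zpow_add₀ ha, zpow_one]
  have hF := congrArg (Int.cast : ℤ → F) hprod
  push_cast at hF
  simp only [deltaD]
  push_cast
  rw [hF, hzpow]
  ring

/-- If `(z - a) A(v) F(z) + ∑_{p=0}^n B_p(v) δ^{(p)}(z/a) = 0` with `A ≠ 0`, then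
`F(z) = ∑_{p=0}^{n+1} f_p δ^{(p)}(z/a)`.  A formal distribution `F(z) ∈ F[[z,z⁻¹]]`
is encoded by its coefficient function `Fd : ℤ → F`, and the identity is stated
coefficientwise in `v^j z^k`. -/
theorem stmt_3 {F : Type*} [Field F] [CharZero F] (a : F) (ha : a ≠ 0)
    (Fd : ℤ → F) (A : PowerSeries F) (hA : A ≠ 0) (n : ℕ) (B : ℕ → PowerSeries F)
    (heq : ∀ (j : ℕ) (k : ℤ),
      PowerSeries.coeff j A * (Fd (k - 1) - a * Fd k) +
        ∑ p ∈ Finset.range (n + 1), PowerSeries.coeff j (B p) * deltaD p a k = 0) :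
    ∃ f : ℕ → F, ∀ k : ℤ, Fd k = ∑ p ∈ Finset.range (n + 2), f p * deltaD p a k := by
  classical
  obtain ⟨j₀, hj₀⟩ : ∃ j, PowerSeries.coeff j A ≠ 0 := by
    by_contra h
    push_neg at h
    exact hA (PowerSeries.ext fun j => by simp [h j])
  set c : ℕ → F := fun p => -(PowerSeries.coeff j₀ (B p)) / PowerSeries.coeff j₀ A with hc_def
  have hrec0 : ∀ k : ℤ, Fd (k-1) - a * Fd k = ∑ p ∈ Finset.range (n+1), c p * deltaD p a k := by
    intro k
    apply mul_left_cancel₀ hj₀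
    rw [Finset.mul_sum]
    have h := heq j₀ k
    have hx : PowerSeries.coeff j₀ A * (Fd (k-1) - a * Fd k)
        = ∑ p ∈ Finset.range (n+1), -(PowerSeries.coeff j₀ (B p) * deltaD p a k) := by
      rw [Finset.sum_neg_distrib]
      linear_combination h
    rw [hx]
    apply Finset.sum_congr rfl
    intro p _
    rw [hc_def]
    field_simp
  set g : ℕ → F := fun q => c q / (-((q:F)+1) * a) with hg_def
  set hfun : ℤ → F := fun k => Fd k - ∑ q ∈ Finset.range (n+1), g q * deltaD (q+1) a k with hfun_def
  have hD : ∀ k : ℤ, hfun (k-1) = a * hfun k := by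
    intro k
    have hsum : ∑ q ∈ Finset.range (n+1), g q * deltaD (q+1) a (k-1)
        = a * (∑ q ∈ Finset.range (n+1), g q * deltaD (q+1) a k)
          + ∑ q ∈ Finset.range (n+1), c q * deltaD q a k := by
      rw [Finset.mul_sum, ← Finset.sum_add_distrib]
      apply Finset.sum_congr rfl
      intro q _
      rw [deltaD_succ_rec a ha q k]
      have hq : ((q:F)+1) ≠ 0 := by
        exact_mod_cast (Nat.cast_ne_zero (R := F)).mpr q.succ_ne_zero
      have hne : (-((q:F)+1) * a) ≠ 0 := mul_ne_zero (neg_ne_zero.mpr hq) ha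
      have hgq : g q * (((q:F)+1)*a) = -c q := by
        simp only [hg_def]
        rw [show (((q:F)+1)*a) = -(-((q:F)+1) * a) by ring, mul_neg,
          div_mul_cancel₀ _ hne]
      linear_combination (-(deltaD q a k)) * hgq
    simp only [hfun_def]
    rw [hsum]
    linear_combination hrec0 k
  have hval : ∀ k : ℤ, hfun k = hfun 0 * a ^ (-k) := by
    intro k
    induction k using Int.induction_on with
    | zero => simp
    | succ k ih =>
      have h1 := hD (k+1)
      rw [add_sub_cancel_right] at h1
      have h2 : hfun (k+1) = a⁻¹ * hfun k := by
        rw [h1]; field_simp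
      rw [h2, ih, show -((k:ℤ)+1) = -k + (-1) by ring, zpow_add₀ ha, zpow_neg_one]
      ring
    | pred k ih =>
      have h1 := hD (-k)
      rw [h1, ih, show -(-(k:ℤ) - 1) = -(-(k:ℤ)) + 1 by ring, zpow_add₀ ha, zpow_one]
      ring
  set f : ℕ → F := fun p => if p = 0 then hfun 0 else g (p-1) with hf_def
  refine ⟨f, fun k => ?_⟩
  rw [Finset.sum_range_succ']
  have hδ0 : deltaD 0 a k = a ^ (-k) := by simp [deltaD]
  have hFd : Fd k = hfun k + ∑ q ∈ Finset.range (n+1), g q * deltaD (q+1) a k := by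
    simp [hfun_def]
  rw [hFd, hval k]
  have hf0 : f 0 = hfun 0 := by simp [hf_def]
  have hfs : ∀ q ∈ Finset.range (n+1), f (q+1) * deltaD (q+1) a k = g q * deltaD (q+1) a k := by
    intro q _; simp [hf_def]
  rw [Finset.sum_congr rfl hfs, hf0, hδ0]
  ring
end

section
/- If a formal distribution F(z) ∈ F[[z,z^{-1}]] satisfies (z - a)^{N} F(z) = 0 for some a ∈ F^× and N ∈ ℕ, then F(z) = ∑_{p=0}^{N-1} f_p δ^{(p)}(z/a) for some f₀,…,f_{N-1} ∈ F. -/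
lemma deltaD_step {F : Type*} [Field F] (p : ℕ) (a : F) (ha : a ≠ 0) (k : ℤ) :
    deltaD (p+1) a (k-1) - a * deltaD (p+1) a k = -((p:F)+1) * a * deltaD p a k := by
  unfold deltaD
  have h1 : ∏ i ∈ Finset.range (p+1), ((k-1) + ((p:ℤ)+1) - (i:ℤ))
      = (∏ i ∈ Finset.range p, (k + (p:ℤ) - (i:ℤ))) * k := by
    rw [Finset.prod_range_succ]
    congr 1
    · exact Finset.prod_congr rfl (fun i _ => by ring)
    · ring
  have h2 : ∏ i ∈ Finset.range (p+1), (k + ((p:ℤ)+1) - (i:ℤ))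
      = (∏ i ∈ Finset.range p, (k + (p:ℤ) - (i:ℤ))) * (k + (p:ℤ) + 1) := by
    rw [Finset.prod_range_succ']
    congr 1
    · exact Finset.prod_congr rfl (fun i _ => by push_cast; ring)
    · push_cast; ring
  have h3 : a ^ (-(k-1)) = a * a ^ (-k) := by
    rw [neg_sub, sub_eq_add_neg, zpow_add₀ ha, zpow_one]
  push_cast [h1, h2, h3]
  ring

lemma zero_step {F : Type*} [Field F] (a : F) (ha : a ≠ 0) (G : ℤ → F)
    (hG : ∀ k : ℤ, G (k-1) - a * G k = 0) : ∀ k : ℤ, G k = G 0 * deltaD 0 a k := by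
  have key : ∀ k : ℤ, G k = G 0 * a ^ (-k) := by
    intro k
    induction k using Int.induction_on with
    | zero => simp
    | succ n ihn =>
      have := hG (n+1)
      simp only [add_sub_cancel_right] at this
      have hG1 : G ((n:ℤ)+1) = a⁻¹ * G n := by
        field_simp at this ⊢
        linear_combination -this
      rw [hG1, ihn, neg_add, zpow_add₀ ha, zpow_neg_one]
      ring
    | pred n ihn =>
      have := hG (-n)
      have hG1 : G (-(n:ℤ)-1) = a * G (-n) := by linear_combination this
      rw [hG1, ihn, show -(-(n:ℤ)-1) = -(-(n:ℤ)) + 1 by ring, zpow_add₀ ha, zpow_one]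
      ring
  intro k
  rw [key k]
  simp [deltaD]

/-- If `(z - a)^N F(z) = 0` for a formal distribution `F(z) ∈ F[[z,z⁻¹]]`
(encoded by its coefficient function `Fd : ℤ → F`, multiplication by `(z-a)`
being the operator `G ↦ (k ↦ G (k-1) - a G k)`), then
`F(z) = ∑_{p=0}^{N-1} f_p δ^{(p)}(z/a)`. -/
theorem stmt_4 {F : Type*} [Field F] [CharZero F] (a : F) (ha : a ≠ 0) (N : ℕ) (Fd : ℤ → F)
    (h : (fun G : ℤ → F => fun k => G (k - 1) - a * G k)^[N] Fd = fun _ => 0) :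
    ∃ f : ℕ → F, ∀ k : ℤ, Fd k = ∑ p ∈ Finset.range N, f p * deltaD p a k := by
  induction N generalizing Fd with
  | zero =>
    refine ⟨0, fun k => ?_⟩
    simp only [Function.iterate_zero, id] at h
    simp [congrFun h k]
  | succ N ih =>
    rw [Function.iterate_succ_apply] at h
    obtain ⟨g, hg⟩ := ih _ h
    set f' : ℕ → F := fun p => g p / (-((p:F)+1) * a) with hf'
    set G : ℤ → F := fun k => Fd k - ∑ p ∈ Finset.range N, f' p * deltaD (p+1) a k with hGdef
    have hTG : ∀ k : ℤ, G (k-1) - a * G k = 0 := by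
      intro k
      have hTFd : Fd (k-1) - a * Fd k = ∑ p ∈ Finset.range N, g p * deltaD p a k := hg k
      have hne : ∀ p : ℕ, (-((p:F)+1) * a) ≠ 0 := by
        intro p
        exact mul_ne_zero (neg_ne_zero.mpr (Nat.cast_add_one_ne_zero p)) ha
      have expand : G (k-1) - a * G k = (Fd (k-1) - a * Fd k) -
          ∑ p ∈ Finset.range N,
            (f' p * deltaD (p+1) a (k-1) - a * (f' p * deltaD (p+1) a k)) := by
        simp only [hGdef]
        rw [Finset.sum_sub_distrib, ← Finset.mul_sum]
        ring
      rw [expand, hTFd, ← Finset.sum_sub_distrib]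
      apply Finset.sum_eq_zero
      intro p _
      have h1 : f' p * deltaD (p+1) a (k-1) - a * (f' p * deltaD (p+1) a k)
          = f' p * (deltaD (p+1) a (k-1) - a * deltaD (p+1) a k) := by ring
      rw [h1, deltaD_step p a ha k]
      have h2 : f' p * (-((p:F)+1) * a * deltaD p a k)
          = (g p / (-((p:F)+1)*a) * (-((p:F)+1)*a)) * deltaD p a k := by rw [hf']; ring
      rw [h2, div_mul_cancel₀ _ (hne p)]
      ring
    have hGk := zero_step a ha G hTG
    refine ⟨fun p => Nat.casesOn p (G 0) f', fun k => ?_⟩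
    rw [Finset.sum_range_succ']
    show Fd k = ∑ p ∈ Finset.range N, f' p * deltaD (p+1) a k + G 0 * deltaD 0 a k
    have hFd : Fd k = G k + ∑ p ∈ Finset.range N, f' p * deltaD (p+1) a k := by
      simp [hGdef]
    rw [hFd, hGk k]
    ring
end

section
/- Let κ⁺(z) ∈ F[[z^{-1}]] and κ⁻(z) ∈ F[[z]] be formal series and suppose there exist formal Laurent distributions arranged as an (N+1)×(N+1) matrix whose (i,j) entry is z_j^{i} · (κ⁺(z_j) - κ⁻(z_j)), such that the product ∏_{0≤i<j≤N} (z_i - z_j) · ∏_{i=0}^N (κ⁺(z_i) - κ⁻(z_i)) = 0 as a formal distribution in z₀,…,z_N. Then there exists a nonzero polynomial P(z) ∈ F[z] of degree at most N such that P(z)·(κ⁺(z) - κ⁻(z)) = 0 in F[[z,z^{-1}]]. -/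
open MvPolynomial Finset

namespace Stmt6Aux

variable {F : Type*} [Field F] {n : ℕ}

/-- the pairing functional -/
noncomputable def Esum (w : (Fin n →₀ ℕ) → F) (p : MvPolynomial (Fin n) F) : F :=
  ∑ d ∈ p.support, MvPolynomial.coeff d p * w d

lemma Esum_eq_of_subset (w : (Fin n →₀ ℕ) → F) (p : MvPolynomial (Fin n) F)
    (S : Finset (Fin n →₀ ℕ)) (hS : p.support ⊆ S) :
    Esum w p = ∑ d ∈ S, MvPolynomial.coeff d p * w d := by
  refine Finset.sum_subset hS fun d _ hd => ?_
  rw [MvPolynomial.notMem_support_iff.mp hd, zero_mul]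

lemma Esum_zero (w : (Fin n →₀ ℕ) → F) : Esum w 0 = 0 := by
  simp [Esum]

lemma Esum_add (w : (Fin n →₀ ℕ) → F) (p q : MvPolynomial (Fin n) F) :
    Esum w (p + q) = Esum w p + Esum w q := by
  rw [Esum_eq_of_subset w (p + q) (p.support ∪ q.support) (MvPolynomial.support_add),
    Esum_eq_of_subset w p (p.support ∪ q.support) Finset.subset_union_left,
    Esum_eq_of_subset w q (p.support ∪ q.support) Finset.subset_union_right,
    ← Finset.sum_add_distrib]
  simp [MvPolynomial.coeff_add, add_mul]

lemma Esum_smul (w : (Fin n →₀ ℕ) → F) (c : F) (p : MvPolynomial (Fin n) F) :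
    Esum w (c • p) = c * Esum w p := by
  rw [Esum_eq_of_subset w (c • p) p.support (MvPolynomial.support_smul),
    Esum, Finset.mul_sum]
  simp [MvPolynomial.coeff_smul, mul_assoc]

lemma Esum_sum (w : (Fin n →₀ ℕ) → F) {α : Type*} (s : Finset α)
    (f : α → MvPolynomial (Fin n) F) :
    Esum w (∑ x ∈ s, f x) = ∑ x ∈ s, Esum w (f x) := by
  classical
  induction s using Finset.induction_on with
  | empty => simp [Esum_zero]
  | @insert a s h ih => rw [Finset.sum_insert h, Esum_add, ih, Finset.sum_insert h]

lemma Esum_monomial (w : (Fin n →₀ ℕ) → F) (d : Fin n →₀ ℕ) (a : F) :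
    Esum w (monomial d a) = a * w d := by
  classical
  by_cases ha : a = 0
  · simp [ha, Esum_zero]
  · rw [Esum_eq_of_subset w _ {d} (by rw [MvPolynomial.support_monomial, if_neg ha]),
      Finset.sum_singleton, MvPolynomial.coeff_monomial, if_pos rfl]

end Stmt6Aux

namespace Stmt6Aux

variable {F : Type*} [Field F] {n : ℕ}

lemma prod_X_pow_univ (s : Fin n →₀ ℕ) :
    (∏ j : Fin n, (X j : MvPolynomial (Fin n) F) ^ s j) = monomial s 1 := by
  classical
  rw [← MvPolynomial.prod_X_pow_eq_monomial]
  exact (Finset.prod_subset (Finset.subset_univ _) fun x _ hx => by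
    rw [Finsupp.notMem_support_iff.mp hx, pow_zero]).symm

lemma keydet (g : ℤ → F) (k : Fin n → ℤ)
    (h : ∑ d ∈ (∏ i : Fin n, ∏ j ∈ Finset.univ.filter (fun j => i < j),
            (MvPolynomial.X i - MvPolynomial.X j) : MvPolynomial (Fin n) F).support,
        MvPolynomial.coeff d
            (∏ i : Fin n, ∏ j ∈ Finset.univ.filter (fun j => i < j),
              (MvPolynomial.X i - MvPolynomial.X j) : MvPolynomial (Fin n) F) *
          ∏ i : Fin n, g (k i - (d i : ℤ)) = 0) :
    (Matrix.of fun i j : Fin n => g (k i - ((j : ℕ) : ℤ))).det = 0 := by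
  classical
  set w : (Fin n →₀ ℕ) → F := fun d => ∏ i, g (k i - (d i : ℤ)) with hw
  set V : MvPolynomial (Fin n) F :=
    ∏ i : Fin n, ∏ j ∈ Finset.univ.filter (fun j => i < j), (X i - X j) with hV
  have hE : Esum w V = 0 := h
  have hfil : ∀ i : Fin n, Finset.univ.filter (fun j => i < j) = Finset.Ioi i := by
    intro i; ext j; simp
  set c : F := ∏ i : Fin n, ∏ j ∈ Finset.Ioi i, (-1 : F) with hc
  have hc0 : c ≠ 0 := by
    rw [hc]
    refine Finset.prod_ne_zero_iff.mpr fun i _ => ?_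
    exact Finset.prod_ne_zero_iff.mpr fun j _ => by norm_num
  set D : MvPolynomial (Fin n) F :=
    (Matrix.vandermonde fun i : Fin n => (X i : MvPolynomial (Fin n) F)).det with hD
  have hVD : V = c • D := by
    rw [MvPolynomial.smul_eq_C_mul, hD, Matrix.det_vandermonde, hV]
    simp only [hfil]
    rw [hc, map_prod, ← Finset.prod_mul_distrib]
    refine Finset.prod_congr rfl fun i _ => ?_
    rw [map_prod, ← Finset.prod_mul_distrib]
    refine Finset.prod_congr rfl fun j _ => ?_
    rw [map_neg, map_one]
    ring
  have hED : Esum w D = 0 := by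
    rw [hVD, Esum_smul] at hE
    exact (mul_eq_zero.mp hE).resolve_left hc0
  set sig : Equiv.Perm (Fin n) → (Fin n →₀ ℕ) :=
    fun σ => Finsupp.equivFunOnFinite.symm fun j : Fin n => ((σ⁻¹ j : Fin n) : ℕ) with hsig
  have hterm : ∀ σ : Equiv.Perm (Fin n),
      (∏ i : Fin n, (X (σ i) : MvPolynomial (Fin n) F) ^ (i : ℕ)) = monomial (sig σ) 1 := by
    intro σ
    have h1 : (∏ i : Fin n, (X (σ i) : MvPolynomial (Fin n) F) ^ (i : ℕ))
        = ∏ j : Fin n, (X j : MvPolynomial (Fin n) F) ^ ((σ⁻¹ j : Fin n) : ℕ) := by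
      rw [← Equiv.prod_comp σ fun j => (X j : MvPolynomial (Fin n) F) ^ ((σ⁻¹ j : Fin n) : ℕ)]
      simp
    rw [h1, ← prod_X_pow_univ (sig σ)]
    refine Finset.prod_congr rfl fun j _ => ?_
    simp [hsig, Finsupp.equivFunOnFinite]
  have hwsig : ∀ σ : Equiv.Perm (Fin n),
      w (sig σ) = ∏ i : Fin n, g (k (σ i) - ((i : ℕ) : ℤ)) := by
    intro σ
    have hws : w (sig σ) = ∏ j : Fin n, g (k j - (((sig σ) j : ℕ) : ℤ)) := rfl
    rw [hws, ← Equiv.prod_comp σ fun j => g (k j - (((sig σ) j : ℕ) : ℤ))]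
    refine Finset.prod_congr rfl fun i _ => ?_
    simp [hsig, Finsupp.equivFunOnFinite]
  have hDexp : Esum w D = ∑ σ : Equiv.Perm (Fin n),
      ((Equiv.Perm.sign σ : ℤ) : F) * ∏ i : Fin n, g (k (σ i) - ((i : ℕ) : ℤ)) := by
    rw [hD, Matrix.det_apply', Esum_sum]
    refine Finset.sum_congr rfl fun σ _ => ?_
    simp only [Matrix.vandermonde_apply]
    rw [hterm σ, show (((Equiv.Perm.sign σ : ℤ) : MvPolynomial (Fin n) F))
        = MvPolynomial.C (((Equiv.Perm.sign σ : ℤ) : F)) from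
        (map_intCast (MvPolynomial.C : F →+* MvPolynomial (Fin n) F) _).symm,
      ← MvPolynomial.smul_eq_C_mul, Esum_smul, Esum_monomial, one_mul, hwsig σ]
  rw [Matrix.det_apply']
  rw [hDexp] at hED
  rw [← hED]
  refine Finset.sum_congr rfl fun σ _ => ?_
  simp [Matrix.of_apply]

end Stmt6Aux

/-- If the Vandermonde-type distribution
`∏_{0≤i<j≤N}(z_i - z_j) ∏_{i=0}^N (κ⁺(z_i) - κ⁻(z_i))` vanishes (where
`κ⁺ ∈ F[[z⁻¹]]`, `κ⁻ ∈ F[[z]]` are encoded by their coefficient functions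
`kp, km : ℕ → F` and `g : ℤ → F` is the coefficient function of `κ⁺ - κ⁻`),
then there is a nonzero polynomial `P` of degree at most `N` with
`P(z)(κ⁺(z) - κ⁻(z)) = 0` in `F[[z,z⁻¹]]`. -/
theorem stmt_6 {F : Type*} [Field F] (N : ℕ) (kp km : ℕ → F) (g : ℤ → F)
    (hg : ∀ k : ℤ, g k = (if k ≤ 0 then kp (-k).toNat else 0) - (if 0 ≤ k then km k.toNat else 0))
    (hvan : ∀ k : Fin (N + 1) → ℤ,
      ∑ d ∈ (∏ i : Fin (N + 1), ∏ j ∈ Finset.univ.filter (fun j => i < j),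
            (MvPolynomial.X i - MvPolynomial.X j) : MvPolynomial (Fin (N + 1)) F).support,
        MvPolynomial.coeff d
            (∏ i : Fin (N + 1), ∏ j ∈ Finset.univ.filter (fun j => i < j),
              (MvPolynomial.X i - MvPolynomial.X j) : MvPolynomial (Fin (N + 1)) F) *
          ∏ i : Fin (N + 1), g (k i - (d i : ℤ)) = 0) :
    ∃ P : Polynomial F, P ≠ 0 ∧ P.natDegree ≤ N ∧
      ∀ k : ℤ, ∑ j ∈ Finset.range (N + 1), P.coeff j * g (k - (j : ℤ)) = 0 := by
  classical
  have hdet : ∀ k : Fin (N + 1) → ℤ,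
      (Matrix.of fun i j : Fin (N + 1) => g (k i - ((j : ℕ) : ℤ))).det = 0 :=
    fun k => Stmt6Aux.keydet g k (hvan k)
  set v : ℤ → (Fin (N + 1) → F) := fun a j => g (a - ((j : ℕ) : ℤ)) with hv
  have hnli : ∀ k : Fin (N + 1) → ℤ, ¬ LinearIndependent F (fun i => v (k i)) := by
    intro k hli
    obtain ⟨cc, hcc, hccM⟩ := Matrix.exists_vecMul_eq_zero_iff.mpr (hdet k)
    apply hcc
    have hz : ∑ i, cc i • v (k i) = 0 := by
      funext j
      have h1 := congrFun hccM j
      simp only [Matrix.vecMul, dotProduct, Matrix.of_apply, Pi.zero_apply] at h1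
      simp only [Finset.sum_apply, Pi.smul_apply, smul_eq_mul, Pi.zero_apply, hv]
      exact h1
    funext i
    exact Fintype.linearIndependent_iff.mp hli cc hz i
  have hspan : Submodule.span F (Set.range v) ≠ ⊤ := by
    intro htop
    obtain ⟨b, hbsub, hbspan, hbli⟩ := exists_linearIndependent F (Set.range v)
    rw [htop] at hbspan
    haveI : Fintype b := hbli.setFinite.fintype
    let B : Module.Basis b F (Fin (N + 1) → F) := Module.Basis.mk hbli (by rw [Subtype.range_coe, hbspan])
    have hcard : Fintype.card b = N + 1 := by
      have h1 := Module.finrank_eq_card_basis B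
      rw [Module.finrank_fintype_fun_eq_card, Fintype.card_fin] at h1
      exact h1.symm
    let e : Fin (N + 1) ≃ b := (Fintype.equivFinOfCardEq hcard).symm
    have hk : ∀ i : Fin (N + 1), ∃ a : ℤ, v a = (e i : Fin (N + 1) → F) :=
      fun i => hbsub (e i).2
    choose k hkk using hk
    refine hnli k ?_
    have h2 : LinearIndependent F fun i : Fin (N + 1) => ((e i : b) : Fin (N + 1) → F) :=
      hbli.comp e e.injective
    have h3 : (fun i : Fin (N + 1) => v (k i))
        = fun i => ((e i : b) : Fin (N + 1) → F) := funext hkk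
    rw [h3]; exact h2
  obtain ⟨f, hf0, hfmap⟩ :=
    Submodule.exists_dual_map_eq_bot_of_lt_top (lt_top_iff_ne_top.mpr hspan) inferInstance
  have hfv : ∀ a : ℤ, f (v a) = 0 := by
    intro a
    have hmem : f (v a) ∈ Submodule.map f (Submodule.span F (Set.range v)) :=
      Submodule.mem_map_of_mem (Submodule.subset_span (Set.mem_range_self a))
    rw [hfmap] at hmem
    exact Submodule.mem_bot F |>.mp hmem
  set c : Fin (N + 1) → F := fun i => f fun j => if i = j then 1 else 0 with hcdef
  have hfx : ∀ x : Fin (N + 1) → F, f x = ∑ i, x i * c i := by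
    intro x
    rw [LinearMap.pi_apply_eq_sum_univ f x]
    simp [hcdef, smul_eq_mul]
  have hcne : ∃ i, c i ≠ 0 := by
    by_contra hall
    push_neg at hall
    apply hf0
    ext x
    simp [hfx, hall]
  obtain ⟨i0, hi0⟩ := hcne
  set P : Polynomial F := ∑ j : Fin (N + 1), Polynomial.C (c j) * Polynomial.X ^ (j : ℕ)
    with hP
  have hcoeff : ∀ j : Fin (N + 1), P.coeff (j : ℕ) = c j := by
    intro j
    rw [hP, Polynomial.finset_sum_coeff]
    simp [Polynomial.coeff_C_mul, Polynomial.coeff_X_pow, Fin.val_inj]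
  refine ⟨P, ?_, ?_, ?_⟩
  · intro h0
    exact hi0 (by rw [← hcoeff i0, h0, Polynomial.coeff_zero])
  · refine Polynomial.natDegree_sum_le_of_forall_le _ _ fun j _ => ?_
    refine le_trans (Polynomial.natDegree_C_mul_le _ _) ?_
    rw [Polynomial.natDegree_X_pow]
    exact Fin.is_le j
  · intro k
    rw [← Fin.sum_univ_eq_sum_range (fun j => P.coeff j * g (k - (j : ℤ))) (N + 1)]
    have h4 : ∑ j : Fin (N + 1), P.coeff (j : ℕ) * g (k - ((j : ℕ) : ℤ)) = f (v k) := by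
      rw [hfx (v k)]
      refine Finset.sum_congr rfl fun j _ => ?_
      rw [hcoeff j, hv, mul_comm]
    rw [h4, hfv k]
end

section
/- Suppose P(z) ∈ F[z] is a nonzero polynomial, κ⁺(z) ∈ F[[z^{-1}]] and κ⁻(z) ∈ F[[z]] are formal series with P(z)(κ⁺(z) - κ⁻(z)) = 0 in F[[z,z^{-1}]]. Then there exists a polynomial Q(z) ∈ F[z] with deg Q ≤ deg P such that κ⁺(z) is the expansion of the rational function Q(z)/P(z) at z = ∞ and κ⁻(z) is its expansion at z = 0. -/
/-- If `P(z)(κ⁺(z) - κ⁻(z)) = 0` for a nonzero polynomial `P`, where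
`κ⁺(z) = ∑_{m≥0} kp m z^{-m} ∈ F[[z⁻¹]]` and `κ⁻(z) = ∑_{m≥0} km m z^{m} ∈ F[[z]]`,
then there is `Q ∈ F[z]` with `deg Q ≤ deg P` such that `P·κ⁺ = Q` (i.e. `κ⁺` is
the expansion of `Q/P` at `∞`) and `P·κ⁻ = Q` (i.e. `κ⁻` is the expansion of
`Q/P` at `0`), all identities being taken coefficientwise in `F[[z,z⁻¹]]`. -/
theorem stmt_7 {F : Type*} [Field F] (P : Polynomial F) (hP : P ≠ 0) (kp km : ℕ → F)
    (hvan : ∀ k : ℤ, ∑ j ∈ Finset.range (P.natDegree + 1),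
      P.coeff j * ((if k - (j : ℤ) ≤ 0 then kp (-(k - (j : ℤ))).toNat else 0) -
        (if 0 ≤ k - (j : ℤ) then km (k - (j : ℤ)).toNat else 0)) = 0) :
    ∃ Q : Polynomial F, Q.natDegree ≤ P.natDegree ∧
      (∀ k : ℤ, ∑ j ∈ Finset.range (P.natDegree + 1),
        P.coeff j * (if k - (j : ℤ) ≤ 0 then kp (-(k - (j : ℤ))).toNat else 0) =
          (if 0 ≤ k then Q.coeff k.toNat else 0)) ∧
      (∀ k : ℤ, ∑ j ∈ Finset.range (P.natDegree + 1),
        P.coeff j * (if 0 ≤ k - (j : ℤ) then km (k - (j : ℤ)).toNat else 0) =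
          (if 0 ≤ k then Q.coeff k.toNat else 0)) := by
  set n := P.natDegree with hn
  -- the coefficient function of P·κ⁺
  set A : ℤ → F := fun k => ∑ j ∈ Finset.range (n + 1),
    P.coeff j * (if k - (j : ℤ) ≤ 0 then kp (-(k - (j : ℤ))).toNat else 0) with hA
  set B : ℤ → F := fun k => ∑ j ∈ Finset.range (n + 1),
    P.coeff j * (if 0 ≤ k - (j : ℤ) then km (k - (j : ℤ)).toNat else 0) with hB
  have hAB : ∀ k, A k = B k := by
    intro k
    have h := hvan k
    have h2 : A k - B k = 0 := by
      rw [hA, hB]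
      rw [← Finset.sum_sub_distrib]
      simp only [← mul_sub]
      exact h
    exact sub_eq_zero.mp h2
  have hApos : ∀ k : ℤ, (n : ℤ) < k → A k = 0 := by
    intro k hk
    rw [hA]
    apply Finset.sum_eq_zero
    intro j hj
    have hj' : (j : ℤ) ≤ n := by
      exact_mod_cast Nat.lt_succ_iff.mp (Finset.mem_range.mp hj)
    rw [if_neg (by omega)]
    ring
  have hBneg : ∀ k : ℤ, k < 0 → B k = 0 := by
    intro k hk
    rw [hB]
    apply Finset.sum_eq_zero
    intro j hj
    rw [if_neg (by omega)]
    ring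
  refine ⟨∑ i ∈ Finset.range (n + 1), Polynomial.monomial i (A (i : ℤ)), ?_, ?_, ?_⟩
  · apply Polynomial.natDegree_sum_le_of_forall_le
    intro i hi
    exact le_trans (Polynomial.natDegree_monomial_le _)
      (Nat.lt_succ_iff.mp (Finset.mem_range.mp hi))
  · intro k
    have hc : ∀ m : ℕ, (∑ i ∈ Finset.range (n + 1),
        Polynomial.monomial i (A (i : ℤ))).coeff m = if m ≤ n then A (m : ℤ) else 0 := by
      intro m
      rw [Polynomial.finset_sum_coeff]
      simp only [Polynomial.coeff_monomial]
      rw [Finset.sum_ite_eq' (Finset.range (n + 1)) m (fun i => A (i : ℤ))]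
      simp [Finset.mem_range, Nat.lt_succ_iff]
    show A k = _
    by_cases hk0 : 0 ≤ k
    · rw [if_pos hk0, hc]
      by_cases hkn : k ≤ (n : ℤ)
      · rw [if_pos (by omega), show ((k.toNat : ℤ)) = k from Int.toNat_of_nonneg hk0]
      · rw [if_neg (by omega)]
        exact hApos k (by omega)
    · rw [if_neg hk0, hAB]
      exact hBneg k (by omega)
  · intro k
    have hc : ∀ m : ℕ, (∑ i ∈ Finset.range (n + 1),
        Polynomial.monomial i (A (i : ℤ))).coeff m = if m ≤ n then A (m : ℤ) else 0 := by
      intro m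
      rw [Polynomial.finset_sum_coeff]
      simp only [Polynomial.coeff_monomial]
      rw [Finset.sum_ite_eq' (Finset.range (n + 1)) m (fun i => A (i : ℤ))]
      simp [Finset.mem_range, Nat.lt_succ_iff]
    show B k = _
    rw [← hAB]
    by_cases hk0 : 0 ≤ k
    · rw [if_pos hk0, hc]
      by_cases hkn : k ≤ (n : ℤ)
      · rw [if_pos (by omega), show ((k.toNat : ℤ)) = k from Int.toNat_of_nonneg hk0]
      · rw [if_neg (by omega)]
        exact hApos k (by omega)
    · rw [if_neg hk0, hAB]
      exact hBneg k (by omega)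
end

section
/- In the quantum Heisenberg algebra H_t^+ generated over K(t) by central invertible γ^{±1/2}, α_+^{±1} and elements α_{+,m} (m ∈ ℤ^×) with relations [α_{+,-m}, α_{+,n}] = -(δ_{m,n}/m)[2m]_t (γ^m - γ^{-m})/(t - t^{-1}), the generating series L⁺(z) = exp(-(t - t^{-1}) ∑_{m≥1} α_{+,-m}(t²z)^m) and R⁺(z) = α_+ exp((t - t^{-1}) ∑_{m≥1} α_{+,m}(t^{-2}z)^{-m}) satisfy R⁺(v)L⁺(z) = θ⁺(z/v) L⁺(z)R⁺(v), where θ⁺(z) = ((1 - t^{6}γz)(1 - t^{2}γ^{-1}z)) / ((1 - t^{2}γz)(1 - t^{6}γ^{-1}z)) expanded for |z| small; moreover any two L⁺'s commute and any two R⁺'s commute. -/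
noncomputable def expSeries {F : Type*} [Field F] {A : Type*} [Ring A] [Algebra F A]
    (f : PowerSeries A) : PowerSeries A :=
  PowerSeries.mk fun n => ∑ k ∈ Finset.range (n + 1),
    ((k.factorial : F)⁻¹) • PowerSeries.coeff (R := A) n (f ^ k)

namespace ExpAux

open PowerSeries Finset

set_option linter.unusedSectionVars false

variable {F : Type*} [Field F] [CharZero F] {A : Type*} [Ring A] [Algebra F A]

lemma coeff_expSeries (f : PowerSeries A) (n : ℕ) :
    PowerSeries.coeff (R := A) n (expSeries (F := F) f) =
      ∑ k ∈ range (n + 1), ((k.factorial : F)⁻¹) • PowerSeries.coeff (R := A) n (f ^ k) := by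
  simp [expSeries]

lemma coeff_pow_eq_zero {f : PowerSeries A} (hf : constantCoeff (R := A) f = 0) :
    ∀ {k n : ℕ}, n < k → coeff (R := A) n (f ^ k) = 0 := by
  intro k
  induction k with
  | zero => intro n h; exact absurd h (Nat.not_lt_zero n)
  | succ k ih =>
    intro n h
    rw [pow_succ, coeff_mul]
    apply Finset.sum_eq_zero
    rintro ⟨i, j⟩ hij
    rw [Finset.HasAntidiagonal.mem_antidiagonal] at hij
    by_cases hik : i < k
    · rw [ih hik, zero_mul]
    · have hj : j = 0 := by omega
      subst hj
      rw [coeff_zero_eq_constantCoeff, hf, mul_zero]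

lemma coeff_zero_expSeries (f : PowerSeries A) :
    coeff (R := A) 0 (expSeries (F := F) f) = 1 := by
  simp [coeff_expSeries]

lemma commute_coeff_pow {x : A} {f : PowerSeries A}
    (h : ∀ i, Commute x (coeff (R := A) i f)) (k n : ℕ) :
    Commute x (coeff (R := A) n (f ^ k)) := by
  induction k generalizing n with
  | zero =>
    rw [pow_zero, coeff_one]
    split <;> simp [Commute]
  | succ k ih =>
    rw [pow_succ, coeff_mul]
    exact Commute.sum_right _ _ _ fun p _ => (ih p.1).mul_right (h p.2)

lemma commute_coeff_expSeries {x : A} {f : PowerSeries A}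
    (h : ∀ i, Commute x (coeff (R := A) i f)) (n : ℕ) :
    Commute x (coeff (R := A) n (expSeries (F := F) f)) := by
  rw [coeff_expSeries]
  exact Commute.sum_right _ _ _ fun k _ => (commute_coeff_pow h k n).smul_right _

lemma mul_comm_of_commute {p q : PowerSeries A}
    (h : ∀ i j, Commute (coeff (R := A) i p) (coeff (R := A) j q)) : p * q = q * p := by
  ext n
  rw [coeff_mul, coeff_mul, Finset.Nat.sum_antidiagonal_eq_sum_range_succ_mk,
    Finset.Nat.sum_antidiagonal_eq_sum_range_succ_mk]
  rw [← Finset.sum_range_reflect]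
  apply Finset.sum_congr rfl
  intro i hi
  rw [Finset.mem_range] at hi
  simp only []
  have h1 : n + 1 - 1 - i = n - i := by omega
  have h2 : n - (n - i) = i := by omega
  rw [h1, h2, (h (n - i) i).eq]
noncomputable def D (F : Type*) [Field F] {A : Type*} [Ring A] [Algebra F A]
    (p : PowerSeries A) : PowerSeries A :=
  PowerSeries.mk fun n => ((n : F) + 1) • PowerSeries.coeff (R := A) (n + 1) p

lemma coeff_D (p : PowerSeries A) (n : ℕ) :
    coeff (R := A) n (D F p) = ((n : F) + 1) • coeff (R := A) (n + 1) p := by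
  simp [D]

lemma D_add (p q : PowerSeries A) : D F (p + q) = D F p + D F q := by
  ext n; simp [coeff_D, smul_add]

lemma D_sub (p q : PowerSeries A) : D F (p - q) = D F p - D F q := by
  ext n; simp [coeff_D, smul_sub]

lemma D_one : D F (1 : PowerSeries A) = 0 := by
  ext n; simp [coeff_D, coeff_one]

lemma D_mul (p q : PowerSeries A) : D F (p * q) = D F p * q + p * D F q := by
  ext n
  rw [coeff_D, map_add, coeff_mul, coeff_mul, coeff_mul]
  have key : ∀ pr ∈ antidiagonal (n + 1),
      ((n : F) + 1) • (coeff (R := A) pr.1 p * coeff (R := A) pr.2 q) =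
        ((pr.1 : F)) • (coeff (R := A) pr.1 p * coeff (R := A) pr.2 q)
          + ((pr.2 : F)) • (coeff (R := A) pr.1 p * coeff (R := A) pr.2 q) := by
    rintro ⟨i, j⟩ hij
    rw [Finset.HasAntidiagonal.mem_antidiagonal] at hij
    simp only []
    rw [← add_smul]
    congr 1
    have h2 : ((i : F)) + j = ((i + j : ℕ) : F) := by push_cast; ring
    rw [h2, hij]; push_cast; ring
  rw [smul_sum, Finset.sum_congr rfl key, Finset.sum_add_distrib]
  congr 1
  · rw [Finset.Nat.antidiagonal_succ, Finset.sum_cons, Finset.sum_map]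
    simp only [Nat.cast_zero, zero_smul, zero_add]
    apply Finset.sum_congr rfl
    rintro ⟨i, j⟩ _
    simp only [Function.Embedding.coe_prodMap, Function.Embedding.refl_apply,
      Function.Embedding.coeFn_mk, Prod.map_apply, coeff_D, Nat.succ_eq_add_one]
    rw [smul_mul_assoc]
    push_cast
    rfl
  · rw [Finset.Nat.antidiagonal_succ', Finset.sum_cons, Finset.sum_map]
    simp only [Nat.cast_zero, zero_smul, zero_add, Nat.cast_add, Nat.cast_one]
    apply Finset.sum_congr rfl
    rintro ⟨i, j⟩ _
    simp only [Function.Embedding.coe_prodMap, Function.Embedding.refl_apply,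
      Function.Embedding.coeFn_mk, Prod.map_apply, coeff_D, Nat.succ_eq_add_one]
    rw [mul_smul_comm]
    push_cast
    rfl

lemma D_pow {f : PowerSeries A} (hc : f * D F f = D F f * f) (k : ℕ) :
    D F (f ^ (k + 1)) = (k + 1) • (f ^ k * D F f) := by
  induction k with
  | zero => simp [D_mul, D_one]
  | succ k ih =>
    have hck : ∀ j : ℕ, D F f * f ^ j = f ^ j * D F f := by
      intro j
      induction j with
      | zero => simp
      | succ j ihj => rw [pow_succ, ← mul_assoc, ihj, mul_assoc, ← hc, mul_assoc]
    rw [pow_succ, D_mul, ih, smul_mul_assoc, mul_assoc, ← hc, ← mul_assoc, ← pow_succ,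
      succ_nsmul (f ^ (k+1) * D F f) (k+1)]
lemma coeff_expSeries_mul {f : PowerSeries A} (hf : constantCoeff (R := A) f = 0)
    (u : PowerSeries A) (m : ℕ) :
    coeff (R := A) m (expSeries (F := F) f * u) =
      ∑ k ∈ range (m + 1), ((k.factorial : F)⁻¹) • coeff (R := A) m (f ^ k * u) := by
  rw [coeff_mul]
  have step : ∀ pr ∈ antidiagonal m,
      coeff (R := A) pr.1 (expSeries (F := F) f) * coeff (R := A) pr.2 u =
        ∑ k ∈ range (m + 1), ((k.factorial : F)⁻¹) • (coeff (R := A) pr.1 (f ^ k) * coeff (R := A) pr.2 u) := by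
    rintro ⟨i, j⟩ hij
    rw [Finset.HasAntidiagonal.mem_antidiagonal] at hij
    simp only []
    rw [coeff_expSeries, Finset.sum_mul]
    simp_rw [smul_mul_assoc]
    apply Finset.sum_subset (Finset.range_subset_range.2 (by omega : i + 1 ≤ m + 1))
    intro k _ hk
    rw [Finset.mem_range, not_lt] at hk
    rw [coeff_pow_eq_zero hf (by omega), zero_mul, smul_zero]
  rw [Finset.sum_congr rfl step, Finset.sum_comm]
  apply Finset.sum_congr rfl
  intro k _
  rw [coeff_mul, smul_sum]

lemma coeff_mul_expSeries {f : PowerSeries A} (hf : constantCoeff (R := A) f = 0)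
    (u : PowerSeries A) (m : ℕ) :
    coeff (R := A) m (u * expSeries (F := F) f) =
      ∑ k ∈ range (m + 1), ((k.factorial : F)⁻¹) • coeff (R := A) m (u * f ^ k) := by
  rw [coeff_mul]
  have step : ∀ pr ∈ antidiagonal m,
      coeff (R := A) pr.1 u * coeff (R := A) pr.2 (expSeries (F := F) f) =
        ∑ k ∈ range (m + 1), ((k.factorial : F)⁻¹) • (coeff (R := A) pr.1 u * coeff (R := A) pr.2 (f ^ k)) := by
    rintro ⟨i, j⟩ hij
    rw [Finset.HasAntidiagonal.mem_antidiagonal] at hij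
    simp only []
    rw [coeff_expSeries, Finset.mul_sum]
    simp_rw [mul_smul_comm]
    apply Finset.sum_subset (Finset.range_subset_range.2 (by omega : j + 1 ≤ m + 1))
    intro k _ hk
    rw [Finset.mem_range, not_lt] at hk
    rw [coeff_pow_eq_zero hf (by omega), mul_zero, smul_zero]
  rw [Finset.sum_congr rfl step, Finset.sum_comm]
  apply Finset.sum_congr rfl
  intro k _
  rw [coeff_mul, smul_sum]
lemma fact_succ_smul (i : ℕ) (x : A) :
    ((((i+1).factorial : F))⁻¹) • ((i+1) • x) = (((i.factorial : F))⁻¹) • x := by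
  rw [← Nat.cast_smul_eq_nsmul F (i+1) x, smul_smul]
  congr 1
  have h1 : ((i+1).factorial : F) = ((i : F) + 1) * (i.factorial : F) := by
    rw [Nat.factorial_succ]; push_cast; ring
  have h2 : ((i.factorial : F)) ≠ 0 := Nat.cast_ne_zero.2 (Nat.factorial_ne_zero i)
  have h3 : ((i : F) + 1) ≠ 0 := Nat.cast_add_one_ne_zero i
  field_simp [h1]
  rw [h1]; push_cast; ring

lemma D_expSeries {f : PowerSeries A} (hf : constantCoeff (R := A) f = 0)
    (hcomm : ∀ i j, Commute (coeff (R := A) i f) (coeff (R := A) j f)) :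
    D F (expSeries (F := F) f) = expSeries (F := F) f * D F f := by
  have hc : f * D F f = D F f * f := by
    apply mul_comm_of_commute
    intro i j
    rw [coeff_D]
    exact (hcomm i (j+1)).smul_right _
  ext n
  rw [coeff_D, coeff_expSeries, smul_sum, coeff_expSeries_mul hf]
  have step : ∀ k, ((k.factorial : F)⁻¹) • (((n : F) + 1) • coeff (R := A) (n+1) (f ^ k)) =
      ((k.factorial : F)⁻¹) • coeff (R := A) n (D F (f ^ k)) := by
    intro k; rw [coeff_D]
  calc ∑ k ∈ range (n + 1 + 1), ((n : F) + 1) • ((k.factorial : F)⁻¹) • coeff (R := A) (n+1) (f ^ k)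
      = ∑ k ∈ range (n + 1 + 1), ((k.factorial : F)⁻¹) • coeff (R := A) n (D F (f ^ k)) := by
        apply Finset.sum_congr rfl
        intro k _
        rw [smul_comm, step]
    _ = (∑ i ∈ range (n + 1), (((i+1).factorial : F)⁻¹) • coeff (R := A) n (D F (f ^ (i+1))))
          + ((Nat.factorial 0 : F)⁻¹) • coeff (R := A) n (D F (f ^ 0)) := Finset.sum_range_succ' _ _
    _ = ∑ i ∈ range (n + 1), ((i.factorial : F)⁻¹) • coeff (R := A) n (f ^ i * D F f) := by
        rw [pow_zero, D_one, map_zero, smul_zero, add_zero]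
        apply Finset.sum_congr rfl
        intro i _
        rw [D_pow hc i, map_nsmul, fact_succ_smul]
lemma eq_zero_of_D_eq {y r : PowerSeries A} (h : D F y = y * r) (h0 : coeff (R := A) 0 y = 0) :
    y = 0 := by
  ext n
  induction n using Nat.strong_induction_on with
  | _ n ih =>
    match n with
    | 0 => simpa using h0
    | Nat.succ n =>
      have hD := congrArg (coeff (R := A) n) h
      rw [coeff_D, coeff_mul] at hD
      have hz : ∑ p ∈ antidiagonal n, coeff (R := A) p.1 y * coeff (R := A) p.2 r = 0 := by
        apply Finset.sum_eq_zero
        rintro ⟨i, j⟩ hij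
        rw [Finset.HasAntidiagonal.mem_antidiagonal] at hij
        simp only []
        have : coeff (R := A) i y = 0 := by simpa using ih i (by omega)
        rw [this, zero_mul]
      rw [hz] at hD
      have hne : ((n : F) + 1) ≠ 0 := Nat.cast_add_one_ne_zero n
      have := congrArg (fun x => ((n : F) + 1)⁻¹ • x) hD
      simpa [inv_smul_smul₀ hne] using this

lemma eq_of_D_eq {y z r : PowerSeries A} (hy : D F y = y * r) (hz : D F z = z * r)
    (h0 : coeff (R := A) 0 y = coeff (R := A) 0 z) : y = z := by
  have : y - z = 0 := by
    apply eq_zero_of_D_eq (F := F) (r := r)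
    · rw [D_sub, hy, hz, sub_mul]
    · rw [map_sub, h0, sub_self]
  rw [← sub_eq_zero]; exact this

lemma expSeries_zero : expSeries (F := F) (0 : PowerSeries A) = 1 := by
  ext n
  rw [coeff_expSeries, Finset.sum_eq_single 0]
  · simp
  · intro k _ hk
    rw [zero_pow hk, map_zero, smul_zero]
  · intro h
    exact absurd (Finset.mem_range.2 (Nat.succ_pos n)) h

lemma constantCoeff_expSeries (f : PowerSeries A) :
    constantCoeff (R := A) (expSeries (F := F) f) = 1 := by
  rw [← coeff_zero_eq_constantCoeff]; exact coeff_zero_expSeries f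

lemma expSeries_add {f g : PowerSeries A} (hf0 : constantCoeff (R := A) f = 0)
    (hg0 : constantCoeff (R := A) g = 0)
    (hff : ∀ i j, Commute (coeff (R := A) i f) (coeff (R := A) j f))
    (hgg : ∀ i j, Commute (coeff (R := A) i g) (coeff (R := A) j g))
    (hfg : ∀ i j, Commute (coeff (R := A) i f) (coeff (R := A) j g)) :
    expSeries (F := F) (f + g) = expSeries (F := F) f * expSeries (F := F) g := by
  have hfg0 : constantCoeff (R := A) (f + g) = 0 := by rw [map_add, hf0, hg0, add_zero]
  have hsum : ∀ i j, Commute (coeff (R := A) i (f + g)) (coeff (R := A) j (f + g)) := by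
    intro i j
    simp only [map_add]
    exact ((hff i j).add_right (hfg i j)).add_left
      (((hfg j i).symm.add_right (hgg i j)))
  have hDfg : D F f * expSeries (F := F) g = expSeries (F := F) g * D F f := by
    apply mul_comm_of_commute
    intro i j
    rw [coeff_D]
    exact (commute_coeff_expSeries (fun l => hfg (i+1) l) j).smul_left _
  apply eq_of_D_eq (F := F) (r := D F f + D F g)
  · rw [D_expSeries hfg0 hsum, D_add]
  · rw [D_mul, D_expSeries hf0 hff, D_expSeries hg0 hgg, mul_add]
    congr 1
    · rw [mul_assoc, hDfg, ← mul_assoc]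
    · rw [mul_assoc]
  · rw [coeff_zero_expSeries, coeff_zero_eq_constantCoeff, map_mul,
      constantCoeff_expSeries, constantCoeff_expSeries, one_mul]
noncomputable def geomArg (F : Type*) [Field F] {A : Type*} [Ring A] [Algebra F A]
    (u : A) : PowerSeries A :=
  PowerSeries.mk fun m => if m = 0 then 0 else ((m : F))⁻¹ • u ^ m

section Geom

variable (u : A)

lemma constantCoeff_geomArg : constantCoeff (R := A) (geomArg F u) = 0 := by
  rw [← coeff_zero_eq_constantCoeff]; simp [geomArg]

lemma commute_coeff_geomArg (hu : ∀ x : A, Commute u x) (x : A) (i : ℕ) : Commute x (coeff (R := A) i (geomArg F u)) := by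
  rw [geomArg, coeff_mk]
  split
  · exact Commute.zero_right x
  · exact ((hu x).symm.pow_right i).smul_right _

lemma commute_coeff_neg_geomArg (hu : ∀ x : A, Commute u x) (x : A) (i : ℕ) :
    Commute x (coeff (R := A) i (-(geomArg F u))) := by
  rw [map_neg]
  exact (commute_coeff_geomArg u hu x i).neg_right

lemma commute_coeff_expSeries_geomArg (hu : ∀ x : A, Commute u x) (x : A) (j : ℕ) :
    Commute x (coeff (R := A) j (expSeries (F := F) (geomArg F u))) :=
  commute_coeff_expSeries (fun i => commute_coeff_geomArg u hu x i) j

lemma D_geomArg : D F (geomArg F u) = PowerSeries.mk fun n => u ^ (n + 1) := by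
  ext n
  rw [coeff_D, geomArg, coeff_mk, coeff_mk, if_neg (Nat.succ_ne_zero n)]
  rw [smul_smul]
  have hne : ((n : F) + 1) ≠ 0 := Nat.cast_add_one_ne_zero n
  have : (((n + 1 : ℕ) : F)) = (n : F) + 1 := by push_cast; ring
  rw [this, mul_inv_cancel₀ hne, one_smul]

lemma D_C_mul_X : D F (C (R := A) u * X) = C (R := A) u := by
  ext n
  rw [coeff_D, coeff_C_mul, coeff_X, coeff_C]
  cases n with
  | zero => simp
  | succ n => simp [Nat.succ_ne_zero]

lemma D_geom_mul : D F (geomArg F u) * (1 - C (R := A) u * X) = C (R := A) u := by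
  rw [mul_sub, mul_one, D_geomArg]
  ext n
  rw [map_sub, ← mul_assoc, coeff_mk]
  cases n with
  | zero =>
    rw [coeff_zero_mul_X, coeff_C]
    simp
  | succ n =>
    rw [coeff_succ_mul_X, coeff_mul_C, coeff_mk, coeff_C]
    rw [if_neg (Nat.succ_ne_zero n), ← pow_succ]
    simp
 
lemma geom_mul_one (hu : ∀ x : A, Commute u x) : expSeries (F := F) (geomArg F u) * (1 - C (R := A) u * X) = 1 := by
  have hgg : ∀ i j, Commute (coeff (R := A) i (geomArg F u)) (coeff (R := A) j (geomArg F u)) :=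
    fun i j => commute_coeff_geomArg u hu _ j
  apply eq_of_D_eq (F := F) (r := 0)
  · rw [D_mul, D_expSeries (constantCoeff_geomArg u) hgg]
    rw [D_sub, D_one, D_C_mul_X, zero_sub, mul_assoc, D_geom_mul]
    rw [mul_neg, add_neg_cancel, mul_zero]
  · rw [D_one, mul_zero]
  · simp only [coeff_zero_eq_constantCoeff, map_mul, map_sub, map_one,
      constantCoeff_expSeries]
    simp
 
lemma comm_geom_N (hu : ∀ x : A, Commute u x) : (1 - C (R := A) u * X) * expSeries (F := F) (geomArg F u) =
    expSeries (F := F) (geomArg F u) * (1 - C (R := A) u * X) := by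
  apply mul_comm_of_commute
  intro i j
  exact commute_coeff_expSeries_geomArg u hu _ j

lemma expSeries_neg_geomArg (hu : ∀ x : A, Commute u x) : expSeries (F := F) (-(geomArg F u)) = 1 - C (R := A) u * X := by
  have hgg : ∀ i j, Commute (coeff (R := A) i (geomArg F u)) (coeff (R := A) j (geomArg F u)) :=
    fun i j => commute_coeff_geomArg u hu _ j
  have hEneg : expSeries (F := F) (geomArg F u) * expSeries (F := F) (-(geomArg F u)) = 1 := by
    rw [← expSeries_add (constantCoeff_geomArg u)
      (by rw [map_neg, constantCoeff_geomArg u, neg_zero])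
      hgg (fun i j => commute_coeff_neg_geomArg u hu _ j)
      (fun i j => commute_coeff_neg_geomArg u hu _ j)]
    rw [add_neg_cancel, expSeries_zero]
  have hNE : (1 - C (R := A) u * X) * expSeries (F := F) (geomArg F u) = 1 := by
    rw [comm_geom_N u hu, geom_mul_one u hu]
  calc expSeries (F := F) (-(geomArg F u))
      = ((1 - C (R := A) u * X) * expSeries (F := F) (geomArg F u)) *
          expSeries (F := F) (-(geomArg F u)) := by rw [hNE, one_mul]
    _ = (1 - C (R := A) u * X) * (expSeries (F := F) (geomArg F u) *
          expSeries (F := F) (-(geomArg F u))) := by rw [mul_assoc]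
    _ = 1 - C (R := A) u * X := by rw [hEneg, mul_one]

end Geom
lemma eq_zero_of_one_mul {P y : PowerSeries A} (hP : constantCoeff (R := A) P = 1)
    (h : P * y = 0) : y = 0 := by
  ext n
  induction n using Nat.strong_induction_on with
  | _ n ih =>
    have hc := congrArg (coeff (R := A) n) h
    rw [map_zero, coeff_mul, Finset.sum_eq_single (0, n)] at hc
    · rw [map_zero]
      simpa [coeff_zero_eq_constantCoeff, hP] using hc
    · rintro ⟨i, j⟩ hij hne
      rw [Finset.HasAntidiagonal.mem_antidiagonal] at hij
      have hj : j < n := by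
        rcases Nat.eq_zero_or_pos i with h0 | h0
        · exfalso; apply hne; subst h0; simp only [Nat.zero_add] at hij; rw [hij]
        · omega
      have := ih j hj
      rw [map_zero] at this
      simp only []
      rw [this, mul_zero]
    · intro hmem
      exact absurd (Finset.HasAntidiagonal.mem_antidiagonal.2 (by simp)) hmem

set_option maxHeartbeats 1000000 in
lemma theta_eq {u₁ u₂ u₃ u₄ : A}
    (h1 : ∀ x, Commute u₁ x) (h2 : ∀ x, Commute u₂ x)
    (h3 : ∀ x, Commute u₃ x) (h4 : ∀ x, Commute u₄ x)
    (fc : PowerSeries A)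
    (hfc : fc = geomArg F u₁ + geomArg F u₂ + (-(geomArg F u₃)) + (-(geomArg F u₄)))
    (θ : PowerSeries A)
    (hθ : (1 - C (R := A) u₁ * X) * (1 - C (R := A) u₂ * X) * θ =
      (1 - C (R := A) u₃ * X) * (1 - C (R := A) u₄ * X)) :
    θ = expSeries (F := F) fc := by
  set g1 := geomArg F u₁ with hg1
  set g2 := geomArg F u₂ with hg2
  set g3 := geomArg F u₃ with hg3
  set g4 := geomArg F u₄ with hg4
  have k1 : ∀ x i, Commute x (coeff (R := A) i g1) := fun x i => commute_coeff_geomArg u₁ h1 x i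
  have k2 : ∀ x i, Commute x (coeff (R := A) i g2) := fun x i => commute_coeff_geomArg u₂ h2 x i
  have k3 : ∀ x i, Commute x (coeff (R := A) i (-g3)) := fun x i => commute_coeff_neg_geomArg u₃ h3 x i
  have k4 : ∀ x i, Commute x (coeff (R := A) i (-g4)) := fun x i => commute_coeff_neg_geomArg u₄ h4 x i
  have c0g : ∀ u : A, constantCoeff (R := A) (geomArg F u) = 0 := fun u => constantCoeff_geomArg u
  have k12 : ∀ x i, Commute x (coeff (R := A) i (g1 + g2)) := by
    intro x i; rw [map_add]; exact (k1 x i).add_right (k2 x i)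
  have k123 : ∀ x i, Commute x (coeff (R := A) i (g1 + g2 + (-g3))) := by
    intro x i; rw [map_add]; exact (k12 x i).add_right (k3 x i)
  -- decompose the exponential
  have e12 : expSeries (F := F) (g1 + g2) = expSeries (F := F) g1 * expSeries (F := F) g2 :=
    expSeries_add (c0g u₁) (c0g u₂) (fun i j => k1 _ j) (fun i j => k2 _ j) (fun i j => k2 _ j)
  have e123 : expSeries (F := F) (g1 + g2 + (-g3)) =
      expSeries (F := F) (g1 + g2) * expSeries (F := F) (-g3) :=
    expSeries_add (by rw [map_add, c0g u₁, c0g u₂, add_zero])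
      (by rw [map_neg, c0g u₃, neg_zero])
      (fun i j => k12 _ j) (fun i j => k3 _ j) (fun i j => k3 _ j)
  have e1234 : expSeries (F := F) fc =
      expSeries (F := F) (g1 + g2 + (-g3)) * expSeries (F := F) (-g4) := by
    rw [hfc]
    exact expSeries_add
      (by rw [map_add, map_add, map_neg, c0g u₁, c0g u₂, c0g u₃]; simp)
      (by rw [map_neg, c0g u₄, neg_zero])
      (fun i j => k123 _ j) (fun i j => k4 _ j) (fun i j => k4 _ j)
  have hexp : expSeries (F := F) fc =
      expSeries (F := F) g1 * expSeries (F := F) g2 *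
        (1 - C (R := A) u₃ * X) * (1 - C (R := A) u₄ * X) := by
    rw [e1234, e123, e12, expSeries_neg_geomArg u₃ h3, expSeries_neg_geomArg u₄ h4,
      mul_assoc (expSeries (F := F) g1 * expSeries (F := F) g2), ← mul_assoc]
  -- multiply by the two left factors
  have hswap : (1 - C (R := A) u₂ * X) * expSeries (F := F) g1 =
      expSeries (F := F) g1 * (1 - C (R := A) u₂ * X) := by
    apply mul_comm_of_commute
    intro i j
    exact commute_coeff_expSeries_geomArg u₁ h1 _ j
  have hN1 : (1 - C (R := A) u₁ * X) * expSeries (F := F) g1 = 1 := by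
    rw [comm_geom_N u₁ h1, geom_mul_one u₁ h1]
  have hN2 : (1 - C (R := A) u₂ * X) * expSeries (F := F) g2 = 1 := by
    rw [comm_geom_N u₂ h2, geom_mul_one u₂ h2]
  have hPE : (1 - C (R := A) u₁ * X) * (1 - C (R := A) u₂ * X) * expSeries (F := F) fc =
      (1 - C (R := A) u₃ * X) * (1 - C (R := A) u₄ * X) := by
    rw [hexp]
    simp only [mul_assoc]
    have s1 : (1 - C (R := A) u₂ * X) * (expSeries (F := F) g1 * (expSeries (F := F) g2 *
        ((1 - C (R := A) u₃ * X) * (1 - C (R := A) u₄ * X)))) =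
        expSeries (F := F) g1 * ((1 - C (R := A) u₂ * X) * (expSeries (F := F) g2 *
        ((1 - C (R := A) u₃ * X) * (1 - C (R := A) u₄ * X)))) := by
      rw [← mul_assoc, hswap, mul_assoc]
    rw [s1, ← mul_assoc (1 - C (R := A) u₂ * X), hN2, one_mul, ← mul_assoc (1 - C (R := A) u₁ * X), hN1,
      one_mul]
  have hsub : (1 - C (R := A) u₁ * X) * (1 - C (R := A) u₂ * X) * (θ - expSeries (F := F) fc) = 0 := by
    rw [mul_sub, hθ, hPE, sub_self]
  have hc1 : constantCoeff (R := A) ((1 - C (R := A) u₁ * X) * (1 - C (R := A) u₂ * X)) = 1 := by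
    rw [map_mul]; simp
  have := eq_zero_of_one_mul hc1 hsub
  rw [sub_eq_zero] at this
  exact this
lemma coeff_d_pow_self {f d : PowerSeries A} (hf0 : constantCoeff (R := A) f = 0)
    (hd0 : constantCoeff (R := A) d = 0) (m : ℕ) : coeff (R := A) m (d * f ^ m) = 0 := by
  rw [coeff_mul]
  apply Finset.sum_eq_zero
  rintro ⟨i, j⟩ hij
  rw [Finset.HasAntidiagonal.mem_antidiagonal] at hij
  simp only []
  rcases Nat.eq_zero_or_pos i with h0 | h0
  · subst h0
    rw [coeff_zero_eq_constantCoeff, hd0, zero_mul]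
  · rw [coeff_pow_eq_zero hf0 (by omega), mul_zero]

lemma commutator_expSeries {u f d : PowerSeries A} (hf0 : constantCoeff (R := A) f = 0)
    (hd0 : constantCoeff (R := A) d = 0) (huf : u * f = f * u + d) (hdf : d * f = f * d) :
    u * expSeries (F := F) f = expSeries (F := F) f * u + d * expSeries (F := F) f := by
  have hdk : ∀ k, d * f ^ k = f ^ k * d := by
    intro k; induction k with
    | zero => simp
    | succ k ih => rw [pow_succ, ← mul_assoc, ih, mul_assoc, hdf, ← mul_assoc]
  have hk : ∀ k : ℕ, u * f ^ (k+1) = f ^ (k+1) * u + (k+1) • (d * f ^ k) := by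
    intro k; induction k with
    | zero => simpa using huf
    | succ k ih =>
      calc u * f ^ (k+1+1) = (u * f ^ (k+1)) * f := by rw [mul_assoc, ← pow_succ]
        _ = (f ^ (k+1) * u + (k+1) • (d * f ^ k)) * f := by rw [ih]
        _ = f ^ (k+1) * (u * f) + (k+1) • (d * (f ^ k * f)) := by
              rw [add_mul, smul_mul_assoc, mul_assoc, mul_assoc]
        _ = f ^ (k+1) * (f * u + d) + (k+1) • (d * f ^ (k+1)) := by rw [huf, ← pow_succ]
        _ = (f ^ (k+1) * (f * u) + f ^ (k+1) * d) + (k+1) • (d * f ^ (k+1)) := by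
              rw [mul_add]
        _ = f ^ (k+1+1) * u + (d * f ^ (k+1) + (k+1) • (d * f ^ (k+1))) := by
              rw [← mul_assoc, ← pow_succ, ← hdk (k+1), add_assoc]
        _ = f ^ (k+1+1) * u + (k+1+1) • (d * f ^ (k+1)) := by
              congr 1
              rw [add_comm (d * f ^ (k+1))]
              exact (succ_nsmul _ _).symm
  ext m
  rw [map_add, coeff_mul_expSeries hf0, coeff_expSeries_mul hf0, coeff_mul_expSeries hf0]
  have expand : ∀ i : ℕ, (((i+1).factorial : F))⁻¹ • coeff (R := A) m (u * f ^ (i+1))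
      = (((i+1).factorial : F))⁻¹ • coeff (R := A) m (f ^ (i+1) * u)
        + ((i.factorial : F))⁻¹ • coeff (R := A) m (d * f ^ i) := by
    intro i
    rw [hk i, map_add, smul_add, map_nsmul, fact_succ_smul]
  calc (∑ k ∈ range (m+1), ((k.factorial : F))⁻¹ • coeff (R := A) m (u * f ^ k))
      = (∑ i ∈ range m, (((i+1).factorial : F))⁻¹ • coeff (R := A) m (u * f ^ (i+1)))
          + ((Nat.factorial 0 : F))⁻¹ • coeff (R := A) m (u * f ^ 0) :=
        Finset.sum_range_succ' _ m
    _ = ((∑ i ∈ range m, (((i+1).factorial : F))⁻¹ • coeff (R := A) m (f ^ (i+1) * u))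
          + ((Nat.factorial 0 : F))⁻¹ • coeff (R := A) m (f ^ 0 * u))
          + (∑ i ∈ range m, ((i.factorial : F))⁻¹ • coeff (R := A) m (d * f ^ i)) := by
        rw [Finset.sum_congr rfl (fun i _ => expand i), Finset.sum_add_distrib]
        simp only [pow_zero, one_mul, mul_one]
        abel
    _ = (∑ k ∈ range (m+1), ((k.factorial : F))⁻¹ • coeff (R := A) m (f ^ k * u))
          + (∑ k ∈ range (m+1), ((k.factorial : F))⁻¹ • coeff (R := A) m (d * f ^ k)) := by
        rw [← Finset.sum_range_succ' (fun k => ((k.factorial : F))⁻¹ • coeff (R := A) m (f ^ k * u)) m]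
        rw [Finset.sum_range_succ (fun k => ((k.factorial : F))⁻¹ • coeff (R := A) m (d * f ^ k)) m]
        rw [coeff_d_pow_self hf0 hd0 m, smul_zero, add_zero]
lemma C_smul (r : F) (x : A) : C (R := A) (r • x) = r • C (R := A) x := by
  ext n
  rw [PowerSeries.coeff_smul, coeff_C, coeff_C]
  split <;> simp

lemma monomial_smul' (p : ℕ) (r : F) (x : A) :
    monomial (R := A) p (r • x) = r • monomial (R := A) p x := by
  ext n
  rw [PowerSeries.coeff_smul, coeff_monomial, coeff_monomial]
  split <;> simp

lemma coeff_monomial_mul' (m p : ℕ) (x : A) (q : PowerSeries A) :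
    coeff (R := A) m (monomial (R := A) p x * q) = if p ≤ m then x * coeff (R := A) (m - p) q else 0 := by
  rw [coeff_mul]
  by_cases h : p ≤ m
  · rw [if_pos h, Finset.sum_eq_single (p, m - p)]
    · rw [coeff_monomial, if_pos rfl]
    · rintro ⟨i, j⟩ hij hne
      rw [Finset.HasAntidiagonal.mem_antidiagonal] at hij
      simp only []
      rcases eq_or_ne i p with hip | hip
      · exfalso; apply hne; subst hip; rw [Prod.mk.injEq]; omega
      · rw [coeff_monomial, if_neg hip, zero_mul]
    · intro hmem
      exact absurd (Finset.HasAntidiagonal.mem_antidiagonal.2 (by omega)) hmem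
  · rw [if_neg h]
    apply Finset.sum_eq_zero
    rintro ⟨i, j⟩ hij
    rw [Finset.HasAntidiagonal.mem_antidiagonal] at hij
    simp only []
    rw [coeff_monomial, if_neg (by omega), zero_mul]

lemma monomial_mul_monomial' (i j : ℕ) (x y : A) :
    monomial (R := A) i x * monomial (R := A) j y = monomial (R := A) (i + j) (x * y) := by
  ext n
  rw [coeff_monomial_mul', coeff_monomial]
  by_cases h : i ≤ n
  · rw [if_pos h, coeff_monomial]
    by_cases h2 : n - i = j
    · rw [if_pos h2, if_pos (by omega)]
    · rw [if_neg h2, if_neg (by omega), mul_zero]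
  · rw [if_neg h, coeff_monomial, if_neg (by omega)]

lemma coeff_expSeries_map {B : Type*} [Ring B] [Algebra F B] (φ : A →+* B)
    (hφ : ∀ (r : F) (x : A), φ (r • x) = r • φ x) (f : PowerSeries A) (n : ℕ) :
    coeff (R := B) n (expSeries (F := F) (PowerSeries.map φ f)) =
      φ (coeff (R := A) n (expSeries (F := F) f)) := by
  rw [coeff_expSeries, coeff_expSeries, map_sum]
  apply Finset.sum_congr rfl
  intro k _
  rw [← map_pow, PowerSeries.coeff_map, hφ]
lemma expSeries_mul_of_conj {f g w : PowerSeries A} (hf0 : constantCoeff (R := A) f = 0)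
    (hg0 : constantCoeff (R := A) g = 0)
    (h : ∀ k, f ^ k * w = w * g ^ k) :
    expSeries (F := F) f * w = w * expSeries (F := F) g := by
  ext p
  rw [coeff_expSeries_mul hf0, coeff_mul_expSeries hg0]
  exact Finset.sum_congr rfl fun k _ => by rw [h k]

set_option maxHeartbeats 1000000 in
theorem bch (a b c : ℕ → A)
    (ha0 : a 0 = 0) (hb0 : b 0 = 0) (hc0 : c 0 = 0)
    (hcz : ∀ p (x : A), Commute (c p) x)
    (hbb : ∀ i j, Commute (b i) (b j))
    (hba : ∀ i j, b i * a j - a j * b i = if i = j then c i else 0)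
    (m n : ℕ) :
    coeff (R := A) n (expSeries (F := F) (PowerSeries.mk b)) *
        coeff (R := A) m (expSeries (F := F) (PowerSeries.mk a)) =
      ∑ p ∈ range (min m n + 1),
        coeff (R := A) p (expSeries (F := F) (PowerSeries.mk c)) *
          (coeff (R := A) (m - p) (expSeries (F := F) (PowerSeries.mk a)) *
            coeff (R := A) (n - p) (expSeries (F := F) (PowerSeries.mk b))) := by
  classical
  have hfa0 : constantCoeff (R := A) (PowerSeries.mk a) = 0 := by
    rw [← coeff_zero_eq_constantCoeff, coeff_mk]; exact ha0
  have hmono_central : ∀ (p : ℕ) (y : PowerSeries A),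
      monomial (R := A) p (c p) * y = y * monomial (R := A) p (c p) := by
    intro p y
    apply mul_comm_of_commute
    intro i j
    rw [coeff_monomial]
    split
    · exact hcz p _
    · exact Commute.zero_left _
  have hstep : ∀ q : ℕ, C (R := A) (b q) * expSeries (F := F) (PowerSeries.mk a) =
      expSeries (F := F) (PowerSeries.mk a) * C (R := A) (b q)
        + monomial (R := A) q (c q) * expSeries (F := F) (PowerSeries.mk a) := by
    intro q
    have hd0 : constantCoeff (R := A) (monomial (R := A) q (c q)) = 0 := by
      rw [← coeff_zero_eq_constantCoeff, coeff_monomial]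
      split
      · rename_i h; exact h ▸ hc0
      · rfl
    have huf : C (R := A) (b q) * PowerSeries.mk a =
        PowerSeries.mk a * C (R := A) (b q) + monomial (R := A) q (c q) := by
      ext j
      simp only [map_add, coeff_C_mul, coeff_mul_C, coeff_monomial, coeff_mk]
      have h2 := sub_eq_iff_eq_add.mp (hba q j)
      rw [h2, add_comm]
      congr 1
      rcases eq_or_ne q j with h | h
      · subst h; simp
      · rw [if_neg h, if_neg (Ne.symm h)]
    exact commutator_expSeries hfa0 hd0 huf (hmono_central q _)
  -- pass to PowerSeries (PowerSeries A)
  obtain ⟨G, hG⟩ : ∃ x, x = PowerSeries.map (C (R := A)) (PowerSeries.mk b) := ⟨_, rfl⟩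
  obtain ⟨C2, hC2⟩ : ∃ x, x = PowerSeries.mk (fun p => monomial (R := A) p (c p)) := ⟨_, rfl⟩
  obtain ⟨W, hW⟩ : ∃ x, x =
      PowerSeries.C (R := PowerSeries A) (expSeries (F := F) (PowerSeries.mk a)) := ⟨_, rfl⟩
  have hG0 : constantCoeff (R := PowerSeries A) G = 0 := by
    rw [hG, ← coeff_zero_eq_constantCoeff, PowerSeries.coeff_map, coeff_mk, hb0, map_zero]
  have hC20 : constantCoeff (R := PowerSeries A) C2 = 0 := by
    rw [hC2, ← coeff_zero_eq_constantCoeff, coeff_mk, hc0, map_zero]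
  have hGC20 : constantCoeff (R := PowerSeries A) (G + C2) = 0 := by
    rw [map_add, hG0, hC20, add_zero]
  have hC2coeff_central : ∀ i (y : PowerSeries A),
      PowerSeries.coeff (R := PowerSeries A) i C2 * y = y * PowerSeries.coeff (R := PowerSeries A) i C2 := by
    intro i y
    rw [hC2, coeff_mk]
    exact hmono_central i y
  have hsingle : G * W = W * (G + C2) := by
    ext p : 1
    rw [hG, hC2, hW, PowerSeries.coeff_mul_C, PowerSeries.coeff_C_mul, map_add,
      PowerSeries.coeff_map, coeff_mk, coeff_mk, mul_add, ← hmono_central p]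
    exact hstep p
  have hconj : ∀ k : ℕ, G ^ k * W = W * (G + C2) ^ k := by
    intro k
    induction k with
    | zero => simp
    | succ k ih => rw [pow_succ, mul_assoc, hsingle, ← mul_assoc, ih, mul_assoc, ← pow_succ]
  have hexpconj : expSeries (F := F) G * W = W * expSeries (F := F) (G + C2) :=
    expSeries_mul_of_conj hG0 hGC20 hconj
  have hGcoeffs : ∀ i j, Commute (PowerSeries.coeff (R := PowerSeries A) i G)
      (PowerSeries.coeff (R := PowerSeries A) j G) := by
    intro i j
    rw [hG, PowerSeries.coeff_map, PowerSeries.coeff_map, coeff_mk, coeff_mk]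
    show _ = _
    rw [← map_mul, ← map_mul, (hbb i j).eq]
  have hsplit : expSeries (F := F) (G + C2) =
      expSeries (F := F) C2 * expSeries (F := F) G := by
    rw [add_comm]
    exact expSeries_add hC20 hG0 (fun i j => hC2coeff_central i _) hGcoeffs
      (fun i j => hC2coeff_central i _)
  have hpow : ∀ (k p : ℕ), PowerSeries.coeff (R := PowerSeries A) p (C2 ^ k) =
      monomial (R := A) p (coeff (R := A) p ((PowerSeries.mk c) ^ k)) := by
    intro k
    induction k with
    | zero =>
      intro p
      rw [pow_zero, pow_zero, PowerSeries.coeff_one, PowerSeries.coeff_one]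
      split
      · rename_i h; subst h; rw [monomial_zero_eq_C_apply, map_one]
      · rw [map_zero]
    | succ k ih =>
      intro p
      rw [pow_succ, pow_succ, PowerSeries.coeff_mul, PowerSeries.coeff_mul, map_sum]
      apply Finset.sum_congr rfl
      rintro ⟨i, j⟩ hij
      rw [Finset.HasAntidiagonal.mem_antidiagonal] at hij
      simp only []
      rw [ih i, hC2, PowerSeries.coeff_mk, PowerSeries.coeff_mk, monomial_mul_monomial', hij]
  have hexpC2 : expSeries (F := F) C2 =
      PowerSeries.mk (fun p =>
        monomial (R := A) p (coeff (R := A) p (expSeries (F := F) (PowerSeries.mk c)))) := by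
    ext p : 1
    rw [coeff_expSeries, PowerSeries.coeff_mk, coeff_expSeries, map_sum]
    apply Finset.sum_congr rfl
    intro k _
    rw [hpow k p, monomial_smul']
  have hTheta_central : ∀ i (x : A),
      Commute (coeff (R := A) i (expSeries (F := F) (PowerSeries.mk c))) x := by
    intro i x
    exact (commute_coeff_expSeries
      (fun l => by rw [coeff_mk]; exact (hcz l x).symm) i).symm
  have hexpC2central : ∀ s, expSeries (F := F) C2 * s = s * expSeries (F := F) C2 := by
    intro s
    apply mul_comm_of_commute
    intro i j
    rw [hexpC2, PowerSeries.coeff_mk]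
    exact mul_comm_of_commute (fun i' j' => by
      rw [coeff_monomial]
      split
      · exact hTheta_central _ _
      · exact Commute.zero_left _)
  have hmain : expSeries (F := F) G * W =
      expSeries (F := F) C2 * (W * expSeries (F := F) G) := by
    rw [hexpconj, hsplit, ← mul_assoc, ← hexpC2central W, mul_assoc]
  -- extraction
  have hcoeffG : ∀ q, PowerSeries.coeff (R := PowerSeries A) q (expSeries (F := F) G) =
      C (R := A) (coeff (R := A) q (expSeries (F := F) (PowerSeries.mk b))) := by
    intro q
    rw [hG]
    exact coeff_expSeries_map (C (R := A)) C_smul (PowerSeries.mk b) q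
  have h1 : C (R := A) (coeff (R := A) n (expSeries (F := F) (PowerSeries.mk b))) *
      expSeries (F := F) (PowerSeries.mk a) =
      PowerSeries.coeff (R := PowerSeries A) n
        (expSeries (F := F) C2 * (W * expSeries (F := F) G)) := by
    rw [← hmain, hW, PowerSeries.coeff_mul_C, hcoeffG]
  have h2 := congrArg (coeff (R := A) m) h1
  rw [coeff_C_mul, PowerSeries.coeff_mul, map_sum] at h2
  have h3 : ∀ pq ∈ antidiagonal n,
      coeff (R := A) m (PowerSeries.coeff (R := PowerSeries A) pq.1 (expSeries (F := F) C2) *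
        PowerSeries.coeff (R := PowerSeries A) pq.2 (W * expSeries (F := F) G)) =
      (if pq.1 ≤ m then
        coeff (R := A) pq.1 (expSeries (F := F) (PowerSeries.mk c)) *
          (coeff (R := A) (m - pq.1) (expSeries (F := F) (PowerSeries.mk a)) *
            coeff (R := A) pq.2 (expSeries (F := F) (PowerSeries.mk b))) else 0) := by
    rintro ⟨i, j⟩ _
    simp only []
    rw [hexpC2, PowerSeries.coeff_mk, hW, PowerSeries.coeff_C_mul, hcoeffG,
      coeff_monomial_mul']
    split
    · rw [coeff_mul_C]
    · rfl
  rw [Finset.sum_congr rfl h3, Finset.Nat.sum_antidiagonal_eq_sum_range_succ_mk] at h2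
  rw [h2]
  rw [← Finset.sum_subset (Finset.range_subset_range.2 (by omega : min m n + 1 ≤ n + 1))]
  · apply Finset.sum_congr rfl
    intro p hp
    rw [Finset.mem_range] at hp
    rw [if_pos (by omega)]
  · intro p hp hnp
    rw [Finset.mem_range] at hp
    rw [Finset.mem_range, not_lt] at hnp
    rw [if_neg (by omega)]
end ExpAux

open ExpAux PowerSeries Finset in
/-- In the quantum Heisenberg algebra `H_t^+` (relations
`[α_{-m}, α_n] = -(δ_{m,n}/m)[2m]_t (γ^m - γ^{-m})/(t - t⁻¹)`, `γ, α₊` central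
invertible), the series `L⁺(z) = exp(-(t-t⁻¹)∑_{m≥1} α_{-m}(t²z)^m)` and
`R⁺(v) = α₊ exp((t-t⁻¹)∑_{m≥1} α_m (t⁻²v)^{-m})` satisfy
`R⁺(v)L⁺(z) = θ⁺(z/v) L⁺(z) R⁺(v)` where `θ⁺` is the power-series expansion of
`((1-t⁶γx)(1-t²γ⁻¹x))/((1-t²γx)(1-t⁶γ⁻¹x))`; moreover any two `L⁺`'s commute
and any two `R⁺`'s commute.  All identities are stated coefficientwise. -/
theorem stmt_12 {F : Type*} [Field F] [CharZero F] (t : F) (ht : t ≠ 0)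
    (ht' : t - t⁻¹ ≠ 0)
    {A : Type*} [Ring A] [Algebra F A]
    (γ αplus : Aˣ)
    (hγ : ∀ x : A, (γ : A) * x = x * (γ : A))
    (hα : ∀ x : A, (αplus : A) * x = x * (αplus : A))
    (α : ℤ → A)
    (hrel : ∀ m n : ℤ, m ≠ 0 → n ≠ 0 →
      α (-m) * α n - α n * α (-m) =
        if m = n then
          (-(1 / (m : F)) * ((t ^ (2 * m) - t ^ (-(2 * m))) / (t - t⁻¹)) / (t - t⁻¹)) •
            (((γ ^ m : Aˣ) : A) - ((γ ^ (-m) : Aˣ) : A))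
        else 0)
    (L R : ℕ → A)
    (hL : ∀ m : ℕ, L m = PowerSeries.coeff (R := A) m (expSeries (F := F)
      (PowerSeries.mk fun k => if k = 0 then 0 else (-(t - t⁻¹) * t ^ (2 * k)) • α (-(k : ℤ)))))
    (hR : ∀ n : ℕ, R n = (αplus : A) * PowerSeries.coeff (R := A) n (expSeries (F := F)
      (PowerSeries.mk fun k => if k = 0 then 0 else ((t - t⁻¹) * t ^ (2 * k)) • α (k : ℤ))))
    (θ : PowerSeries A)
    (hθ : (1 - PowerSeries.C (R := A) (t ^ 2 • (γ : A)) * PowerSeries.X) *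
          (1 - PowerSeries.C (R := A) (t ^ 6 • ((γ⁻¹ : Aˣ) : A)) * PowerSeries.X) * θ =
          (1 - PowerSeries.C (R := A) (t ^ 6 • (γ : A)) * PowerSeries.X) *
          (1 - PowerSeries.C (R := A) (t ^ 2 • ((γ⁻¹ : Aˣ) : A)) * PowerSeries.X)) :
    (∀ m n : ℕ, R n * L m =
        ∑ p ∈ Finset.range (min m n + 1),
          PowerSeries.coeff (R := A) p θ * (L (m - p) * R (n - p))) ∧
    (∀ m m' : ℕ, L m * L m' = L m' * L m) ∧
    (∀ n n' : ℕ, R n * R n' = R n' * R n) := by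
  classical
  obtain ⟨a, ha⟩ : ∃ a : ℕ → A,
      a = fun k : ℕ => if k = 0 then 0 else (-(t - t⁻¹) * t ^ (2 * k)) • α (-(k : ℤ)) := ⟨_, rfl⟩
  obtain ⟨b, hb⟩ : ∃ b : ℕ → A,
      b = fun k : ℕ => if k = 0 then 0 else ((t - t⁻¹) * t ^ (2 * k)) • α (k : ℤ) := ⟨_, rfl⟩
  obtain ⟨c, hcdef⟩ : ∃ c : ℕ → A, c = fun p : ℕ => if p = 0 then 0 else
      ((p : F))⁻¹ • ((t ^ 2 • (γ : A)) ^ p + (t ^ 6 • ((γ⁻¹ : Aˣ) : A)) ^ p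
        - (t ^ 6 • (γ : A)) ^ p - (t ^ 2 • ((γ⁻¹ : Aˣ) : A)) ^ p) := ⟨_, rfl⟩
  have hL' : ∀ m : ℕ, L m = coeff (R := A) m (expSeries (F := F) (PowerSeries.mk a)) := by
    intro m; rw [hL m, ha]
  have hR' : ∀ n : ℕ, R n =
      (αplus : A) * coeff (R := A) n (expSeries (F := F) (PowerSeries.mk b)) := by
    intro n; rw [hR n, hb]
  have ha0 : a 0 = 0 := by simp [ha]
  have hb0 : b 0 = 0 := by simp [hb]
  have hc0 : c 0 = 0 := by simp [hcdef]
  have haval : ∀ i : ℕ, i ≠ 0 → a i = (-(t - t⁻¹) * t ^ (2 * i)) • α (-(i : ℤ)) := by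
    intro i h; rw [ha]; simp [h]
  have hbval : ∀ i : ℕ, i ≠ 0 → b i = ((t - t⁻¹) * t ^ (2 * i)) • α (i : ℤ) := by
    intro i h; rw [hb]; simp [h]
  -- centrality of γ and γ⁻¹
  have hγc : ∀ x : A, Commute (γ : A) x := fun x => hγ x
  have hγinv : ∀ x : A, Commute ((γ⁻¹ : Aˣ) : A) x := fun x => ((hγc x).symm.units_inv_right).symm
  have hu₁ : ∀ x : A, Commute (t ^ 2 • (γ : A)) x := fun x => (hγc x).smul_left _
  have hu₂ : ∀ x : A, Commute (t ^ 6 • ((γ⁻¹ : Aˣ) : A)) x := fun x => (hγinv x).smul_left _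
  have hu₃ : ∀ x : A, Commute (t ^ 6 • (γ : A)) x := fun x => (hγc x).smul_left _
  have hu₄ : ∀ x : A, Commute (t ^ 2 • ((γ⁻¹ : Aˣ) : A)) x := fun x => (hγinv x).smul_left _
  have hcz : ∀ p (x : A), Commute (c p) x := by
    intro p x
    simp only [hcdef]
    split
    · exact Commute.zero_left x
    · exact ((((((hu₁ x).pow_left p).add_left ((hu₂ x).pow_left p)).sub_left
        ((hu₃ x).pow_left p))).sub_left ((hu₄ x).pow_left p)).smul_left _
  -- commutation of generators
  have hαneg : ∀ i j : ℕ, i ≠ 0 → j ≠ 0 → Commute (α (-(i : ℤ))) (α (-(j : ℤ))) := by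
    intro i j hi hj
    have h := hrel (i : ℤ) (-(j : ℤ)) (by exact_mod_cast hi) (by simp; exact_mod_cast hj)
    rw [if_neg (by omega)] at h
    exact sub_eq_zero.mp h
  have hαpos : ∀ i j : ℕ, i ≠ 0 → j ≠ 0 → Commute (α (i : ℤ)) (α (j : ℤ)) := by
    intro i j hi hj
    have h := hrel (-(i : ℤ)) (j : ℤ) (by simp; exact_mod_cast hi) (by exact_mod_cast hj)
    rw [neg_neg, if_neg (by omega)] at h
    exact sub_eq_zero.mp h
  have haa : ∀ i j, Commute (a i) (a j) := by
    intro i j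
    by_cases hi : i = 0
    · rw [ha]; simp [hi]
    · by_cases hj : j = 0
      · rw [ha]; simp [hj]
      · rw [haval i hi, haval j hj]
        exact ((hαneg i j hi hj).smul_left _).smul_right _
  have hbb : ∀ i j, Commute (b i) (b j) := by
    intro i j
    by_cases hi : i = 0
    · rw [hb]; simp [hi]
    · by_cases hj : j = 0
      · rw [hb]; simp [hj]
      · rw [hbval i hi, hbval j hj]
        exact ((hαpos i j hi hj).smul_left _).smul_right _
  -- the key commutator computation
  have hba : ∀ i j, b i * a j - a j * b i = if i = j then c i else 0 := by
    intro i j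
    by_cases hi : i = 0
    · rw [hb]; simp only [hi]; simp [hc0, ha0, hcdef]
    · by_cases hj : j = 0
      · rw [ha]; simp only [hj]; simp [hi]
      · rcases eq_or_ne i j with hij | hij
        · subst hij
          rw [if_pos rfl, haval i hi, hbval i hi]
          have h := hrel (i : ℤ) (i : ℤ) (by exact_mod_cast hi) (by exact_mod_cast hi)
          rw [if_pos rfl] at h
          have hflip : α (i : ℤ) * α (-(i : ℤ)) - α (-(i : ℤ)) * α (i : ℤ) =
              -((-(1 / ((i : ℤ) : F)) *
                ((t ^ (2 * (i : ℤ)) - t ^ (-(2 * (i : ℤ)))) / (t - t⁻¹)) / (t - t⁻¹)) •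
                (((γ ^ (i : ℤ) : Aˣ) : A) - ((γ ^ (-(i : ℤ)) : Aˣ) : A))) := by
            rw [← h]; abel
          rw [smul_mul_smul_comm, smul_mul_smul_comm]
          rw [show ((t - t⁻¹) * t ^ (2 * i)) * (-(t - t⁻¹) * t ^ (2 * i)) =
            (-(t - t⁻¹) * t ^ (2 * i)) * ((t - t⁻¹) * t ^ (2 * i)) by ring]
          rw [← smul_sub, hflip, smul_neg, ← neg_smul, smul_smul]
          -- identify the group element
          have hval : (((γ ^ (i : ℤ) : Aˣ) : A) - ((γ ^ (-(i : ℤ)) : Aˣ) : A)) =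
              ((γ : A) ^ i - ((γ⁻¹ : Aˣ) : A) ^ i) := by
            rw [zpow_neg, zpow_natCast, ← inv_pow]
            rw [Units.val_pow_eq_pow_val, Units.val_pow_eq_pow_val]
          rw [hval, hcdef]
          simp only [if_neg hi]
          -- now both sides are scalars smul the same element
          have hrw : ((t ^ 2 • (γ : A)) ^ i + (t ^ 6 • ((γ⁻¹ : Aˣ) : A)) ^ i
              - (t ^ 6 • (γ : A)) ^ i - (t ^ 2 • ((γ⁻¹ : Aˣ) : A)) ^ i) =
              ((t ^ 2) ^ i - (t ^ 6) ^ i) • ((γ : A) ^ i - ((γ⁻¹ : Aˣ) : A) ^ i) := by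
            rw [smul_pow, smul_pow, smul_pow, smul_pow, smul_sub, sub_smul, sub_smul]
            abel
          rw [hrw, smul_smul]
          congr 1
          -- scalar identity in F
          have hz1 : t ^ (2 * (i : ℤ)) = t ^ (2 * i) := by
            rw [show (2 * (i : ℤ)) = ((2 * i : ℕ) : ℤ) by push_cast; ring, zpow_natCast]
          have hz2 : t ^ (-(2 * (i : ℤ))) = (t ^ (2 * i))⁻¹ := by
            rw [zpow_neg, hz1]
          rw [hz1, hz2]
          have h1 : (t : F) ^ (2 * i) ≠ 0 := pow_ne_zero _ ht
          have h2 : ((i : F)) ≠ 0 := Nat.cast_ne_zero.2 hi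
          have h3 : (((i : ℤ) : F)) = (i : F) := by push_cast; ring
          have h6 : (t ^ 6) ^ i = ((t ^ 2) ^ i) ^ 3 := by
            rw [← pow_mul, ← pow_mul, ← pow_mul]
            congr 1
            ring
          rw [h3, pow_mul t 2 i, h6]
          have h5 : ((t : F) ^ 2) ^ i ≠ 0 := pow_ne_zero _ (pow_ne_zero _ ht)
          have h4 := ht'
          generalize hXg : (t ^ 2) ^ i = X at h5 ⊢
          generalize hdg : t - t⁻¹ = d at h4 ⊢
          field_simp
          ring
        · rw [if_neg hij, haval j hj, hbval i hi]
          have h := hrel (-(i : ℤ)) (-(j : ℤ)) (by simp; exact_mod_cast hi)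
            (by simp; exact_mod_cast hj)
          rw [neg_neg, if_neg (by omega)] at h
          have hcomm : α (i : ℤ) * α (-(j : ℤ)) = α (-(j : ℤ)) * α (i : ℤ) :=
            sub_eq_zero.mp h
          rw [smul_mul_smul_comm, smul_mul_smul_comm, hcomm,
            show (-(t - t⁻¹) * t ^ (2 * j)) * ((t - t⁻¹) * t ^ (2 * i)) =
              ((t - t⁻¹) * t ^ (2 * i)) * (-(t - t⁻¹) * t ^ (2 * j)) by ring, sub_self]
  -- BCH
  have hBCH := bch (F := F) a b c ha0 hb0 hc0 hcz hbb hba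
  -- θ identification
  have hmkc : PowerSeries.mk c =
      geomArg F (t ^ 2 • (γ : A)) + geomArg F (t ^ 6 • ((γ⁻¹ : Aˣ) : A))
        + (-(geomArg F (t ^ 6 • (γ : A)))) + (-(geomArg F (t ^ 2 • ((γ⁻¹ : Aˣ) : A)))) := by
    ext p
    simp only [map_add, map_neg, coeff_mk, geomArg, hcdef]
    by_cases hp : p = 0
    · simp [hp]
    · simp only [if_neg hp]
      rw [smul_sub, smul_sub, smul_add]
      abel
  have hθ' : θ = expSeries (F := F) (PowerSeries.mk c) :=
    theta_eq hu₁ hu₂ hu₃ hu₄ (PowerSeries.mk c) hmkc θ hθ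
  refine ⟨?_, ?_, ?_⟩
  · -- main relation
    intro m n
    rw [hR' n, hL' m, mul_assoc, hBCH m n, Finset.mul_sum]
    apply Finset.sum_congr rfl
    intro p _
    rw [hθ', hL' (m - p), hR' (n - p)]
    rw [hα]
    simp only [mul_assoc]
    rw [hα (coeff (R := A) (n - p) (expSeries (F := F) (PowerSeries.mk b)))]
  · -- L's commute
    intro m m'
    rw [hL' m, hL' m']
    have step1 : ∀ i q, Commute (a i) (coeff (R := A) q (expSeries (F := F) (PowerSeries.mk a))) :=
      fun i q => commute_coeff_expSeries (fun l => by rw [coeff_mk]; exact haa i l) q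
    have step2 : ∀ q q', Commute (coeff (R := A) q (expSeries (F := F) (PowerSeries.mk a)))
        (coeff (R := A) q' (expSeries (F := F) (PowerSeries.mk a))) :=
      fun q q' => commute_coeff_expSeries (fun l => by rw [coeff_mk]; exact (step1 l q).symm) q'
    exact (step2 m m').eq
  · -- R's commute
    intro n n'
    rw [hR' n, hR' n']
    have step1 : ∀ i q, Commute (b i) (coeff (R := A) q (expSeries (F := F) (PowerSeries.mk b))) :=
      fun i q => commute_coeff_expSeries (fun l => by rw [coeff_mk]; exact hbb i l) q
    have step2 : ∀ q q', Commute (coeff (R := A) q (expSeries (F := F) (PowerSeries.mk b)))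
        (coeff (R := A) q' (expSeries (F := F) (PowerSeries.mk b))) :=
      fun q q' => commute_coeff_expSeries (fun l => by rw [coeff_mk]; exact (step1 l q).symm) q'
    have key : ∀ x y : A, ((αplus : A) * x) * ((αplus : A) * y) =
        (αplus : A) * ((αplus : A) * (x * y)) := by
      intro x y
      rw [mul_assoc, ← mul_assoc x, ← hα x, mul_assoc]
    rw [key, key, (step2 n n').eq]
end
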